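/- Let A be a commutative K-ring, P an A-module, Q another A-module. There is an A-module isomorphism Dif_k(P,Q) ≅ Hom_A(J^k(P), Q): every k-order Q-valued differential operator Δ on P factorizes uniquely as Δ = 𝔣^Δ ∘ J^k through the canonical map J^k: P → J^k(P), p ↦ 1 ⊗_k p, and an A-module homomorphism 𝔣^Δ: J^k(P) → Q. -/

import Mathlib

open TensorProduct

section

variable (K A : Type*) [CommRing K] [CommRing A] [Algebra K A]
variable (P : Type*) [AddCommGroup P] [Module K P] [Module A P] [IsScalarTower K A P]

/-- Scalar multiplication by `b : A` as a `K`-linear endomorphism of `P`. -/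
def smulK (b : A) : P →ₗ[K] P where
  toFun p := b • p
  map_add' := smul_add b
  map_smul' k p := smul_comm b k p

/-- `δ^b (a ⊗ p) = (b a) ⊗ p − a ⊗ (b • p)` on `A ⊗_K P`. -/
noncomputable def deltaT (b : A) : (A ⊗[K] P) →ₗ[K] (A ⊗[K] P) :=
  TensorProduct.map (LinearMap.mulLeft K b) LinearMap.id -
    TensorProduct.map LinearMap.id (smulK K A P b)

/-- Iterated composition `δ^{b_0} ∘ ⋯ ∘ δ^{b_{n-1}}`. -/
noncomputable def deltaTComp : (n : ℕ) → (Fin n → A) → ((A ⊗[K] P) →ₗ[K] (A ⊗[K] P))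
  | 0, _ => LinearMap.id
  | n + 1, bs => deltaT K A P (bs 0) ∘ₗ deltaTComp n (fun i => bs i.succ)

/-- The submodule `μ^{k+1} ⊂ A ⊗_K P` generated by all
`δ^{b_0} ∘ ⋯ ∘ δ^{b_k} (a ⊗ p)`. -/
noncomputable def jetRel (k : ℕ) : Submodule A (A ⊗[K] P) :=
  Submodule.span A {x | ∃ (bs : Fin (k + 1) → A) (a : A) (p : P),
    x = deltaTComp K A P (k + 1) bs (a ⊗ₜ[K] p)}

/-- The `k`-order jet module `J^k(P) = (A ⊗_K P) / μ^{k+1}`. -/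
noncomputable def Jet (k : ℕ) : Type _ := (A ⊗[K] P) ⧸ jetRel K A P k

noncomputable instance (k : ℕ) : AddCommGroup (Jet K A P k) :=
  Submodule.Quotient.addCommGroup _

noncomputable instance (k : ℕ) : Module A (Jet K A P k) :=
  Submodule.Quotient.module _

/-- The canonical morphism `J^k : P → J^k(P)`, `p ↦ 1 ⊗_k p`. -/
noncomputable def jetMk (k : ℕ) (p : P) : Jet K A P k :=
  Submodule.Quotient.mk ((1 : A) ⊗ₜ[K] p)

/-- `(δ_a Φ)(p) = a • Φ p − Φ (a • p)`. -/
def deltaOp {Q : Type*} [AddCommGroup Q] [Module K Q] [Module A Q] [IsScalarTower K A Q]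
    (a : A) (Φ : P →ₗ[K] Q) : P →ₗ[K] Q where
  toFun p := a • Φ p - Φ (a • p)
  map_add' p q := by simp [smul_add]; abel
  map_smul' k p := by
    simp only [RingHom.id_apply, smul_sub]
    rw [smul_comm a k p, Φ.map_smul k (a • p), Φ.map_smul k p, smul_comm a k (Φ p)]

/-- `Δ` is a differential operator of order `s`. -/
def IsDiffOp {Q : Type*} [AddCommGroup Q] [Module K Q] [Module A Q] [IsScalarTower K A Q] :
    ℕ → (P →ₗ[K] Q) → Prop
  | 0, Δ => ∀ a : A, deltaOp K A P a Δ = 0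
  | s + 1, Δ => ∀ a : A, IsDiffOp s (deltaOp K A P a Δ)

end


section Aux

variable {K A : Type*} [CommRing K] [CommRing A] [Algebra K A]
variable {P : Type*} [AddCommGroup P] [Module K P] [Module A P] [IsScalarTower K A P]
variable {Q : Type*} [AddCommGroup Q] [Module K Q] [Module A Q] [IsScalarTower K A Q]

@[simp] lemma smulK_apply (b : A) (p : P) : smulK K A P b p = b • p := rfl

/-- `a ⊗ p ↦ a • Δ p` as an `A`-linear map. -/
noncomputable def fDelta (Δ : P →ₗ[K] Q) : A ⊗[K] P →ₗ[A] Q :=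
  TensorProduct.AlgebraTensorModule.lift (LinearMap.toSpanSingleton A (P →ₗ[K] Q) Δ)

@[simp] lemma fDelta_tmul (Δ : P →ₗ[K] Q) (a : A) (p : P) :
    fDelta Δ (a ⊗ₜ[K] p) = a • Δ p := by
  simp [fDelta]

lemma deltaTComp_succ (n : ℕ) (bs : Fin (n + 1) → A) :
    deltaTComp K A P (n + 1) bs =
      deltaT K A P (bs 0) ∘ₗ deltaTComp K A P n (fun i => bs i.succ) := rfl

lemma deltaTComp_zero (bs : Fin 0 → A) :
    deltaTComp K A P 0 bs = LinearMap.id := rfl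

lemma fDelta_zero : (fDelta (0 : P →ₗ[K] Q) : A ⊗[K] P →ₗ[A] Q) = 0 := by
  apply LinearMap.ext; intro x
  induction x using TensorProduct.induction_on with
  | zero => simp
  | tmul a p => simp
  | add x y hx hy => simp only [map_add, hx, hy, add_zero]

lemma fDelta_deltaT (Δ : P →ₗ[K] Q) (b : A) (x : A ⊗[K] P) :
    fDelta Δ (deltaT K A P b x) = fDelta (deltaOp K A P b Δ) x := by
  induction x using TensorProduct.induction_on with
  | zero => simp
  | tmul a p =>
      simp only [deltaT, LinearMap.sub_apply, TensorProduct.map_tmul,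
        LinearMap.mulLeft_apply, LinearMap.id_coe, id_eq, smulK_apply, map_sub,
        fDelta_tmul, deltaOp, LinearMap.coe_mk, AddHom.coe_mk, smul_sub]
      rw [mul_comm b a, mul_smul]
  | add x y hx hy => simp only [map_add, hx, hy]

lemma fDelta_deltaTComp_eq_zero : ∀ (s : ℕ) (Δ : P →ₗ[K] Q), IsDiffOp K A P s Δ →
    ∀ (bs : Fin (s + 1) → A) (x : A ⊗[K] P),
      fDelta Δ (deltaTComp K A P (s + 1) bs x) = 0
  | 0, Δ, h, bs, x => by
      rw [deltaTComp_succ, deltaTComp_zero]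
      simp only [LinearMap.comp_apply, LinearMap.id_apply, fDelta_deltaT,
        h (bs 0), fDelta_zero, LinearMap.zero_apply]
  | s + 1, Δ, h, bs, x => by
      rw [deltaTComp_succ]
      simp only [LinearMap.comp_apply]
      rw [fDelta_deltaT]
      exact fDelta_deltaTComp_eq_zero s _ (h (bs 0)) _ _

lemma deltaTComp_mem_jetRel (k : ℕ) (bs : Fin (k + 1) → A) (x : A ⊗[K] P) :
    deltaTComp K A P (k + 1) bs x ∈ jetRel K A P k := by
  induction x using TensorProduct.induction_on with
  | zero => simpa using (jetRel K A P k).zero_mem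
  | tmul a p => exact Submodule.subset_span ⟨bs, a, p, rfl⟩
  | add x y hx hy => rw [map_add]; exact add_mem hx hy

lemma deltaT_smul (a b : A) (x : A ⊗[K] P) :
    deltaT K A P a (b • x) = b • deltaT K A P a x := by
  induction x using TensorProduct.induction_on with
  | zero => simp
  | tmul c p =>
      simp only [TensorProduct.smul_tmul', deltaT, LinearMap.sub_apply,
        TensorProduct.map_tmul, LinearMap.mulLeft_apply, LinearMap.id_coe, id_eq,
        smulK_apply, smul_sub, smul_eq_mul]
      rw [mul_left_comm]
  | add x y hx hy => rw [smul_add, map_add, map_add, hx, hy, smul_add]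

lemma deltaOp_comp_mk (G : A ⊗[K] P →ₗ[K] Q)
    (hG : ∀ (b : A) (x : A ⊗[K] P), G (b • x) = b • G x) (a : A) :
    deltaOp K A P a (G ∘ₗ (TensorProduct.mk K A P 1)) =
      (G ∘ₗ deltaT K A P a) ∘ₗ (TensorProduct.mk K A P 1) := by
  ext p
  have h1 : deltaT K A P a ((1 : A) ⊗ₜ[K] p) =
      a • ((1 : A) ⊗ₜ[K] p) - (1 : A) ⊗ₜ[K] (a • p) := by
    simp [deltaT, TensorProduct.smul_tmul', smul_eq_mul]
  simp only [deltaOp, LinearMap.coe_mk, AddHom.coe_mk, LinearMap.comp_apply,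
    TensorProduct.mk_apply, h1, map_sub, hG]

lemma isDiffOp_of_vanish : ∀ (s : ℕ) (G : A ⊗[K] P →ₗ[K] Q)
    (_ : ∀ (b : A) (x : A ⊗[K] P), G (b • x) = b • G x)
    (_ : ∀ (bs : Fin (s + 1) → A) (x : A ⊗[K] P),
      G (deltaTComp K A P (s + 1) bs x) = 0),
    IsDiffOp K A P s (G ∘ₗ (TensorProduct.mk K A P 1))
  | 0, G, hG, h0 => by
      intro a
      rw [deltaOp_comp_mk G hG a]
      ext p
      have := h0 (fun _ => a) ((1 : A) ⊗ₜ[K] p)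
      rw [deltaTComp_succ, deltaTComp_zero] at this
      simpa using this
  | s + 1, G, hG, h0 => by
      intro a
      rw [deltaOp_comp_mk G hG a]
      have := isDiffOp_of_vanish s (G ∘ₗ deltaT K A P a)
        (fun b x => by simp only [LinearMap.comp_apply, deltaT_smul, hG])
        (fun bs x => by
          have h2 : deltaTComp K A P (s + 2) (Fin.cons a bs) x =
              deltaT K A P a (deltaTComp K A P (s + 1) bs x) := by
            rw [deltaTComp_succ]
            simp only [Fin.cons_zero, Fin.cons_succ, LinearMap.comp_apply]
          have := h0 (Fin.cons a bs) x
          rw [h2] at this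
          simpa using this)
      exact this

end Aux

/-- There is an `A`-module isomorphism
`Dif_k(P,Q) ≅ Hom_A(J^k(P), Q)`: every `k`-order `Q`-valued differential operator `Δ`
on `P` factorizes uniquely as `Δ = 𝔣^Δ ∘ J^k` through the canonical map
`J^k : P → J^k(P)` and an `A`-module homomorphism `𝔣^Δ : J^k(P) → Q`. -/
theorem diffOp_equiv_hom_jet
    (K A P Q : Type*) [CommRing K] [CommRing A] [Algebra K A]
    [AddCommGroup P] [Module K P] [Module A P] [IsScalarTower K A P]
    [AddCommGroup Q] [Module K Q] [Module A Q] [IsScalarTower K A Q]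
    (k : ℕ) :
    ∃ e : {Δ : P →ₗ[K] Q // IsDiffOp K A P k Δ} ≃ (Jet K A P k →ₗ[A] Q),
      (∀ (Δ : {Δ : P →ₗ[K] Q // IsDiffOp K A P k Δ}) (p : P),
        Δ.1 p = e Δ (jetMk K A P k p)) ∧
      (∀ f g : Jet K A P k →ₗ[A] Q,
        (∀ p : P, f (jetMk K A P k p) = g (jetMk K A P k p)) → f = g) := by
  classical
  have hker : ∀ Δ : {Δ : P →ₗ[K] Q // IsDiffOp K A P k Δ},
      jetRel K A P k ≤ LinearMap.ker (fDelta Δ.1) := by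
    intro Δ
    rw [jetRel, Submodule.span_le]
    rintro x ⟨bs, a, p, rfl⟩
    exact fDelta_deltaTComp_eq_zero k Δ.1 Δ.2 bs _
  let toF : {Δ : P →ₗ[K] Q // IsDiffOp K A P k Δ} → (Jet K A P k →ₗ[A] Q) :=
    fun Δ => Submodule.liftQ (jetRel K A P k) (fDelta Δ.1) (hker Δ)
  let invF : (Jet K A P k →ₗ[A] Q) → {Δ : P →ₗ[K] Q // IsDiffOp K A P k Δ} := fun f =>
    ⟨((f ∘ₗ (jetRel K A P k).mkQ).restrictScalars K) ∘ₗ (TensorProduct.mk K A P 1),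
     isDiffOp_of_vanish k _ (fun b x => map_smul (f ∘ₗ (jetRel K A P k).mkQ) b x)
       (fun bs x => by
         have hmem : (jetRel K A P k).mkQ (deltaTComp K A P (k + 1) bs x) = 0 :=
           (Submodule.Quotient.mk_eq_zero _).mpr (deltaTComp_mem_jetRel k bs x)
         show f ((jetRel K A P k).mkQ (deltaTComp K A P (k + 1) bs x)) = 0
         rw [hmem]; exact map_zero f)⟩
  have hfact : ∀ (Δ : {Δ : P →ₗ[K] Q // IsDiffOp K A P k Δ}) (p : P),
      Δ.1 p = toF Δ (jetMk K A P k p) := by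
    intro Δ p
    show Δ.1 p = Submodule.liftQ (jetRel K A P k) (fDelta Δ.1) (hker Δ)
      (Submodule.Quotient.mk ((1 : A) ⊗ₜ[K] p))
    rw [Submodule.liftQ_apply, fDelta_tmul, one_smul]
  have huniq : ∀ f g : Jet K A P k →ₗ[A] Q,
      (∀ p : P, f (jetMk K A P k p) = g (jetMk K A P k p)) → f = g := by
    intro f g h
    apply LinearMap.ext; intro z
    obtain ⟨x, rfl⟩ := Submodule.Quotient.mk_surjective _ z
    induction x using TensorProduct.induction_on with
    | zero =>
        rw [show (Submodule.Quotient.mk (0 : A ⊗[K] P) : Jet K A P k) = 0 from rfl]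
        exact (map_zero f).trans (map_zero g).symm
    | tmul a p =>
        have hsm : (Submodule.Quotient.mk (a ⊗ₜ[K] p) : Jet K A P k) =
            a • jetMk K A P k p := by
          show _ = a • (Submodule.Quotient.mk ((1 : A) ⊗ₜ[K] p) : _ ⧸ jetRel K A P k)
          rw [← Submodule.Quotient.mk_smul]
          congr 1
          rw [TensorProduct.smul_tmul', smul_eq_mul, mul_one]
        rw [hsm, map_smul, map_smul, h p]
    | add x y hx hy =>
        rw [show (Submodule.Quotient.mk (x + y) : Jet K A P k) =
            Submodule.Quotient.mk x + Submodule.Quotient.mk y from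
          Submodule.Quotient.mk_add _]
        have e1 := map_add f (Submodule.Quotient.mk x : Jet K A P k) (Submodule.Quotient.mk y)
        exact e1.trans ((congrArg₂ (· + ·) hx hy).trans (map_add g _ _).symm)
  have hleft : ∀ Δ, invF (toF Δ) = Δ := by
    intro Δ
    apply Subtype.ext
    apply LinearMap.ext; intro p
    show toF Δ (jetMk K A P k p) = Δ.1 p
    exact (hfact Δ p).symm
  have hright : ∀ f, toF (invF f) = f := by
    intro f
    apply huniq
    intro p
    rw [← hfact (invF f) p]
    rfl
  exact ⟨Equiv.mk toF invF hleft hright, fun Δ p => hfact Δ p, huniq⟩
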